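/- Let O be a finite set of operations with machine assignment mach : O → M, processing times delay : O → ℝ with delay(x) ≥ 0, and a partial immediate-predecessor function pre. Let X be a list enumerating all operations of O exactly once such that whenever an operation x has an immediate predecessor pre(x), that predecessor occurs in X strictly before x. Run CFP on X from the all-zero initial state, and for each operation x let C(x) be the completion time assigned to x and let S(x) := C(x) − delay(x) be its start time. Then: (a) S(x) ≥ 0 for every x; (b) S(x) ≥ C(pre(x)) whenever x has an immediate predecessor; (c) for any two distinct operations x, y with mach(x) = mach(y), either S(x) ≥ C(y) or S(y) ≥ C(x); and (d) the makespan returned by CFP equals max over x of C(x). -/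

import Mathlib

noncomputable section

/-- One step of the cost-from-partial (CFP) procedure: process operation `x`
from state `st = (f^M, f^O)` of machine- and operation-completion times.
We set `s := max (f^M (mach x)) (f^O (pre x))` (the second term omitted when
`x` has no immediate predecessor) and record `s + delay x` as the new
completion time of both `x` and its machine. -/
def JSP.step {O M : Type*} [DecidableEq O] [DecidableEq M]
    (mach : O → M) (delay : O → ℝ) (pre : O → Option O)
    (st : (M → ℝ) × (O → ℝ)) (x : O) : (M → ℝ) × (O → ℝ) :=
  let s : ℝ := match pre x with
    | none => st.1 (mach x)
    | some y => max (st.1 (mach x)) (st.2 y)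
  (Function.update st.1 (mach x) (s + delay x),
   Function.update st.2 x (s + delay x))

/-- The cost-from-partial procedure (Algorithm CFP): process the list `X` of
operations left to right from the initial state `st = (f^M, f^O)`, and return
the resulting makespan, i.e. the maximum over all machines `k` of the final
machine-completion time `f^M k`. -/
def JSP.CFP {O M : Type*} [DecidableEq O] [DecidableEq M] [Fintype M] [Nonempty M]
    (mach : O → M) (delay : O → ℝ) (pre : O → Option O)
    (X : List O) (st : (M → ℝ) × (O → ℝ)) : ℝ :=
  Finset.univ.sup' Finset.univ_nonempty (X.foldl (JSP.step mach delay pre) st).1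


/-- `u` occurs strictly before `v` in the list `L`. -/
def List.OccursBefore {O : Type*} (L : List O) (u v : O) : Prop :=
  ∃ l₁ l₂ : List O, L = l₁ ++ u :: l₂ ∧ v ∈ l₂

set_option linter.unusedSectionVars false

namespace JSPaux

variable {O M : Type*} [DecidableEq O] [DecidableEq M]
variable (mach : O → M) (delay : O → ℝ) (pre : O → Option O)

def sval (st : (M → ℝ) × (O → ℝ)) (x : O) : ℝ :=
  match pre x with
  | none => st.1 (mach x)
  | some y => max (st.1 (mach x)) (st.2 y)

lemma step_def (st : (M → ℝ) × (O → ℝ)) (x : O) :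
    JSP.step mach delay pre st x =
      (Function.update st.1 (mach x) (sval mach pre st x + delay x),
       Function.update st.2 x (sval mach pre st x + delay x)) := rfl

lemma fM_le_sval (st : (M → ℝ) × (O → ℝ)) (x : O) :
    st.1 (mach x) ≤ sval mach pre st x := by
  rcases h : pre x with _ | y <;> simp [sval, h]

lemma frame (L : List O) (st : (M → ℝ) × (O → ℝ)) (x : O) (hx : x ∉ L) :
    (L.foldl (JSP.step mach delay pre) st).2 x = st.2 x := by
  induction L generalizing st with
  | nil => rfl
  | cons z L ih =>
      simp only [List.mem_cons, not_or] at hx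
      rw [List.foldl_cons, ih _ hx.2, step_def]
      exact Function.update_of_ne hx.1 _ _

lemma mono1 (hdelay : ∀ x, 0 ≤ delay x) (L : List O) (st : (M → ℝ) × (O → ℝ)) (k : M) :
    st.1 k ≤ (L.foldl (JSP.step mach delay pre) st).1 k := by
  induction L generalizing st with
  | nil => exact le_refl _
  | cons z L ih =>
      rw [List.foldl_cons]
      refine le_trans ?_ (ih _)
      rw [step_def]; dsimp only
      by_cases hk : k = mach z
      · subst hk
        rw [Function.update_self]
        have := fM_le_sval mach pre st z
        linarith [hdelay z]
      · rw [Function.update_of_ne hk]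

lemma domC (hdelay : ∀ x, 0 ≤ delay x) (L : List O) (st : (M → ℝ) × (O → ℝ)) (x : O)
    (h : st.2 x ≤ st.1 (mach x)) :
    (L.foldl (JSP.step mach delay pre) st).2 x ≤
      (L.foldl (JSP.step mach delay pre) st).1 (mach x) := by
  induction L generalizing st with
  | nil => exact h
  | cons z L ih =>
      rw [List.foldl_cons]
      refine ih _ ?_
      rw [step_def]; dsimp only
      by_cases hz : z = x
      · subst hz
        rw [Function.update_self, Function.update_self]
      · rw [Function.update_of_ne (Ne.symm hz)]
        by_cases hm : mach x = mach z
        · rw [hm, Function.update_self]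
          have h1 := fM_le_sval mach pre st z
          have h2 := hdelay z
          rw [hm] at h
          linarith
        · rw [Function.update_of_ne hm]
          exact h

lemma machD (L : List O) (hnd : L.Nodup) (st : (M → ℝ) × (O → ℝ)) (k : M) :
    (L.foldl (JSP.step mach delay pre) st).1 k = st.1 k ∨
      ∃ x ∈ L, (L.foldl (JSP.step mach delay pre) st).1 k =
        (L.foldl (JSP.step mach delay pre) st).2 x := by
  induction L generalizing st with
  | nil => exact Or.inl rfl
  | cons z L ih =>
      rw [List.foldl_cons]
      have hz : z ∉ L := (List.nodup_cons.mp hnd).1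
      rcases ih (List.nodup_cons.mp hnd).2 (JSP.step mach delay pre st z) with h | ⟨x, hx, h⟩
      · by_cases hk : k = mach z
        · subst hk
          refine Or.inr ⟨z, List.mem_cons_self, ?_⟩
          rw [h, frame mach delay pre L _ z hz, step_def]
          dsimp only
          rw [Function.update_self, Function.update_self]
        · left
          rw [h, step_def]
          dsimp only
          rw [Function.update_of_ne hk]
      · exact Or.inr ⟨x, List.mem_cons_of_mem _ hx, h⟩

lemma mem_before {X : List O} {x y : O} (hx : x ∈ X) (hy : y ∈ X) (hne : x ≠ y) :
    X.OccursBefore x y ∨ X.OccursBefore y x := by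
  obtain ⟨a, b, rfl⟩ := List.append_of_mem hx
  rcases List.mem_append.mp hy with hy | hy
  · obtain ⟨a₁, a₂, rfl⟩ := List.append_of_mem hy
    right
    exact ⟨a₁, a₂ ++ x :: b, by simp, List.mem_append_right _ (List.mem_cons_self)⟩
  · rcases List.mem_cons.mp hy with rfl | hy
    · exact absurd rfl hne
    · exact Or.inl ⟨a, b, rfl, hy⟩

lemma key (hdelay : ∀ x, 0 ≤ delay x) (P Q : List O) (x : O)
    (hnd : (P ++ x :: Q).Nodup) (st0 : (M → ℝ) × (O → ℝ)) :
    ((P ++ x :: Q).foldl (JSP.step mach delay pre) st0).2 x =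
      sval mach pre (P.foldl (JSP.step mach delay pre) st0) x + delay x := by
  have hxQ : x ∉ Q := by
    have := (List.nodup_append.mp hnd).2.1
    exact (List.nodup_cons.mp this).1
  rw [List.foldl_append, List.foldl_cons, frame mach delay pre Q _ x hxQ, step_def]
  exact Function.update_self _ _ _

end JSPaux

/-- The greedy schedule produced by CFP from a job-respecting permutation of
all operations (each operation occurring exactly once, each immediate
predecessor occurring earlier) is a feasible job shop schedule: with
completion times `C x` given by the final operation-completion vector and
start times `S x := C x - delay x`, (a) starts are nonnegative, (b) each
operation starts after its immediate predecessor completes, (c) operations on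
a common machine do not overlap, and (d) the makespan returned by CFP is the
maximum completion time. -/
theorem JSP.CFP_schedule_feasible {O M : Type*} [DecidableEq O] [DecidableEq M]
    [Fintype O] [Nonempty O] [Fintype M] [Nonempty M]
    (mach : O → M) (delay : O → ℝ) (pre : O → Option O)
    (hdelay : ∀ x, 0 ≤ delay x)
    (X : List O) (hnd : X.Nodup) (hall : ∀ x : O, x ∈ X)
    (hpre : ∀ x ∈ X, ∀ y : O, pre x = some y → X.OccursBefore y x)
    (C : O → ℝ)
    (hC : C = (X.foldl (JSP.step mach delay pre)
      ((fun _ => (0 : ℝ)), (fun _ => (0 : ℝ)))).2)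
    (S : O → ℝ) (hS : ∀ x, S x = C x - delay x) :
    (∀ x, 0 ≤ S x) ∧
    (∀ x y : O, pre x = some y → C y ≤ S x) ∧
    (∀ x y : O, x ≠ y → mach x = mach y → C y ≤ S x ∨ C x ≤ S y) ∧
    JSP.CFP mach delay pre X ((fun _ => (0 : ℝ)), (fun _ => (0 : ℝ))) =
      Finset.univ.sup' Finset.univ_nonempty C := by
  classical
  set st0 : (M → ℝ) × (O → ℝ) := ((fun _ => (0 : ℝ)), (fun _ => (0 : ℝ))) with hst0
  set step := JSP.step mach delay pre with hstep
  -- For any decomposition of X at x, the start time of x is the sval at that point.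
  have hmain : ∀ (P Q : List O) (x : O), X = P ++ x :: Q →
      S x = JSPaux.sval mach pre (P.foldl step st0) x := by
    intro P Q x hX
    rw [hS, hC, hX, hstep, JSPaux.key mach delay pre hdelay P Q x (hX ▸ hnd) st0]
    ring
  -- Once processed, the operation completion value is frozen: it equals C.
  have hCfix : ∀ (P Q : List O) (y : O), X = P ++ Q → y ∈ P →
      C y = (P.foldl step st0).2 y := by
    intro P Q y hX hyP
    have hyQ : y ∉ Q := fun h => (List.nodup_append.mp (hX ▸ hnd)).2.2 y hyP y h rfl
    rw [hC, hX, List.foldl_append, hstep,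
      JSPaux.frame mach delay pre Q _ y hyQ]
  -- (a) nonnegative starts
  have ha : ∀ x, 0 ≤ S x := by
    intro x
    obtain ⟨P, Q, hX⟩ := List.append_of_mem (hall x)
    rw [hmain P Q x hX]
    refine le_trans ?_ (JSPaux.fM_le_sval mach pre _ x)
    have := JSPaux.mono1 mach delay pre hdelay P st0 (mach x)
    simpa [hst0] using this
  -- core machine lemma: if x occurs before y on the same machine then C x ≤ S y
  have hcore : ∀ x y : O, X.OccursBefore x y → mach x = mach y → C x ≤ S y := by
    intro x y hocc hm
    obtain ⟨l₁, l₂, hX, hyl₂⟩ := hocc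
    obtain ⟨b₁, b₂, rfl⟩ := List.append_of_mem hyl₂
    have hX' : X = (l₁ ++ x :: b₁) ++ y :: b₂ := by rw [hX]; simp
    have hxP : x ∈ l₁ ++ x :: b₁ := List.mem_append_right _ (List.mem_cons_self)
    have h1 : C x = ((l₁ ++ x :: b₁).foldl step st0).2 x := hCfix _ _ x hX' hxP
    have h2 := hmain (l₁ ++ x :: b₁) b₂ y hX'
    have h3 : ((l₁ ++ x :: b₁).foldl step st0).2 x ≤
        ((l₁ ++ x :: b₁).foldl step st0).1 (mach x) :=
      JSPaux.domC mach delay pre hdelay _ st0 x (by simp [hst0])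
    have h4 := JSPaux.fM_le_sval mach pre ((l₁ ++ x :: b₁).foldl step st0) y
    rw [h1, h2, ← hm] at *
    exact le_trans h3 h4
  -- (b) precedence constraints
  have hb : ∀ x y : O, pre x = some y → C y ≤ S x := by
    intro x y hxy
    obtain ⟨a, b, hX, hxb⟩ := hpre x (hall x) y hxy
    obtain ⟨b₁, b₂, rfl⟩ := List.append_of_mem hxb
    have hX' : X = (a ++ y :: b₁) ++ x :: b₂ := by rw [hX]; simp
    have hyP : y ∈ a ++ y :: b₁ := List.mem_append_right _ (List.mem_cons_self)
    have h1 : C y = ((a ++ y :: b₁).foldl step st0).2 y := hCfix _ _ y hX' hyP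
    have h2 := hmain (a ++ y :: b₁) b₂ x hX'
    rw [h1, h2, JSPaux.sval, hxy]
    exact le_max_right _ _
  refine ⟨ha, hb, ?_, ?_⟩
  · -- (c) no overlap on machines
    intro x y hne hm
    rcases JSPaux.mem_before (hall x) (hall y) hne with h | h
    · exact Or.inr (hcore x y h hm)
    · exact Or.inl (hcore y x h hm.symm)
  · -- (d) makespan
    have hCnonneg : ∀ x, 0 ≤ C x := by
      intro x
      have := ha x
      rw [hS] at this
      linarith [hdelay x]
    apply le_antisymm
    · refine Finset.sup'_le _ _ fun k _ => ?_
      rcases JSPaux.machD mach delay pre X hnd st0 k with h | ⟨x, hx, h⟩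
      · have h0 : (X.foldl step st0).1 k = 0 := by simpa [hst0] using h
        obtain ⟨x₀⟩ := (inferInstance : Nonempty O)
        refine le_trans (le_of_eq h0) (le_trans (hCnonneg x₀) ?_)
        exact Finset.le_sup' C (Finset.mem_univ x₀)
      · have : (X.foldl step st0).1 k = C x := by rw [h, hC]
        rw [this]
        exact Finset.le_sup' C (Finset.mem_univ x)
    · refine Finset.sup'_le _ _ fun x _ => ?_
      have h1 : C x ≤ (X.foldl step st0).1 (mach x) := by
        rw [hC]
        exact JSPaux.domC mach delay pre hdelay X st0 x (by simp [hst0])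
      exact le_trans h1 (Finset.le_sup' _ (Finset.mem_univ (mach x)))

end
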